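/- Let ω be a uniformly elliptic nearest-neighbor environment on ℤ^d with ellipticity constant κ. Suppose that for every u > 0 there exists a continuous function G̃_u : ℝ^d → ℝ such that for every η ∈ ℝ^d and every sequence (y_N)_{N≥1} in ℤ^d with y_N/N → η, one has (1/N) · G_{u,ω}(N, 0, y_N) → G̃_u(η) as N → ∞. Define I : ℝ^d → (−∞, +∞] by I(x) := sup_{u>0} G̃_u(x). Then for every closed set F ⊆ ℝ^d, limsup_{N→∞} (1/N) · log P_{0,ω}(X_N/N ∈ F) ≤ − inf_{x∈F} I(x), with the conventions log 0 = −∞ and inf over the empty set = +∞. -/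
import Mathlib


open Filter

/-- The set of the `2d` unit vectors of `ℤ^d`. -/
def unitVecs (d : ℕ) : Finset (Fin d → ℤ) :=
  (Finset.univ.image fun i : Fin d => fun j => if j = i then (1 : ℤ) else 0) ∪
  (Finset.univ.image fun i : Fin d => fun j => if j = i then (-1 : ℤ) else 0)

/-- Quenched `n`-step transition probabilities of the random walk in environment `ω`. -/
noncomputable def qtp (d : ℕ) (ω : (Fin d → ℤ) → (Fin d → ℤ) → ℝ) :
    ℕ → (Fin d → ℤ) → (Fin d → ℤ) → ℝ
  | 0, x, y => if x = y then 1 else 0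
  | n + 1, x, y => ∑ e ∈ unitVecs d, ω x e * qtp d ω n (x + e) y

/-- `G_{u,ω}(t,x,y) := - log sup_n { e^{-u |n - t|} p_n(x,y) }`. -/
noncomputable def Gfun (d : ℕ) (ω : (Fin d → ℤ) → (Fin d → ℤ) → ℝ)
    (u t : ℝ) (x y : Fin d → ℤ) : ℝ :=
  - Real.log (⨆ n : ℕ, Real.exp (-u * |(n : ℝ) - t|) * qtp d ω n x y)

/-- `P_{0,ω}(X_N/N ∈ A) := ∑_{z : z/N ∈ A} p_N(0,z)`. -/
noncomputable def probQ (d : ℕ) (ω : (Fin d → ℤ) → (Fin d → ℤ) → ℝ)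
    (N : ℕ) (A : Set (Fin d → ℝ)) : ℝ :=
  ∑' z : Fin d → ℤ, A.indicator (fun _ => qtp d ω N 0 z) (fun i => (z i : ℝ) / (N : ℝ))

/-- Extended-real logarithm, with the convention `log x = -∞` for `x ≤ 0`. -/
noncomputable def elog (x : ℝ) : EReal := if x ≤ 0 then ⊥ else ((Real.log x : ℝ) : EReal)

lemma unitVecs_abs {d : ℕ} {e : Fin d → ℤ} (he : e ∈ unitVecs d) (i : Fin d) : |e i| ≤ 1 := by
  simp only [unitVecs, Finset.mem_union, Finset.mem_image, Finset.mem_univ, true_and] at he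
  rcases he with ⟨j, rfl⟩ | ⟨j, rfl⟩ <;> by_cases h : i = j <;> simp [h]

section basic
variable {d : ℕ} {ω : (Fin d → ℤ) → (Fin d → ℤ) → ℝ} (hω : ∀ x, ∀ e ∈ unitVecs d, 0 ≤ ω x e)
    (hsum : ∀ x, ∑ e ∈ unitVecs d, ω x e = 1)

include hω in
lemma qtp_nonneg : ∀ n x y, 0 ≤ qtp d ω n x y := by
  intro n
  induction n with
  | zero => intro x y; simp only [qtp]; split <;> norm_num
  | succ n ih => intro x y; simp only [qtp]
                 exact Finset.sum_nonneg fun e he => mul_nonneg (hω x e he) (ih _ _)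

include hω hsum in
lemma qtp_le_one : ∀ n x y, qtp d ω n x y ≤ 1 := by
  intro n
  induction n with
  | zero => intro x y; simp only [qtp]; split <;> norm_num
  | succ n ih => intro x y
                 simp only [qtp]
                 calc ∑ e ∈ unitVecs d, ω x e * qtp d ω n (x + e) y
                     ≤ ∑ e ∈ unitVecs d, ω x e * 1 :=
                       Finset.sum_le_sum fun e he => mul_le_mul_of_nonneg_left (ih _ _) (hω x e he)
                   _ = 1 := by simp [hsum x]

lemma qtp_support : ∀ n (x y : Fin d → ℤ), qtp d ω n x y ≠ 0 → ∀ i, |y i - x i| ≤ n := by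
  intro n
  induction n with
  | zero => intro x y h i
            simp only [qtp] at h
            by_cases hxy : x = y
            · subst hxy; simp
            · simp [hxy] at h
  | succ n ih =>
      intro x y h i
      simp only [qtp] at h
      obtain ⟨e, he, hne⟩ := Finset.exists_ne_zero_of_sum_ne_zero h
      have h2 : qtp d ω n (x + e) y ≠ 0 := right_ne_zero_of_mul hne
      have h4 := ih (x + e) y h2 i
      have he2 := unitVecs_abs he i
      have : |y i - x i| ≤ |y i - (x i + e i)| + |e i| := by
        have := abs_sub_abs_le_abs_sub (y i - x i) 0
        calc |y i - x i| = |(y i - (x i + e i)) + e i| := by ring_nf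
          _ ≤ _ := abs_add_le _ _
      have h3 : |y i - (x + e) i| = |y i - (x i + e i)| := by simp [Pi.add_apply]
      rw [h3] at h4
      push_cast
      linarith
end basic


section gb
variable {d : ℕ} {ω : (Fin d → ℤ) → (Fin d → ℤ) → ℝ} (hω : ∀ x, ∀ e ∈ unitVecs d, 0 ≤ ω x e)
    (hsum : ∀ x, ∑ e ∈ unitVecs d, ω x e = 1)

include hω hsum in
lemma qtp_le_exp (u : ℝ) (hu : 0 ≤ u) (N : ℕ) (x y : Fin d → ℤ) :
    qtp d ω N x y ≤ Real.exp (-(Gfun d ω u (N : ℝ) x y)) := by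
  set s := ⨆ n : ℕ, Real.exp (-u * |(n : ℝ) - (N : ℝ)|) * qtp d ω n x y with hs
  have hbdd : BddAbove (Set.range fun n : ℕ => Real.exp (-u * |(n : ℝ) - (N : ℝ)|) * qtp d ω n x y) := by
    refine ⟨1, ?_⟩
    rintro _ ⟨n, rfl⟩
    have h1 : Real.exp (-u * |(n : ℝ) - (N : ℝ)|) ≤ 1 := by
      rw [Real.exp_le_one_iff]
      exact mul_nonpos_of_nonpos_of_nonneg (neg_nonpos.mpr hu) (abs_nonneg _)
    calc Real.exp (-u * |(n : ℝ) - (N : ℝ)|) * qtp d ω n x y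
        ≤ 1 * 1 := mul_le_mul h1 (qtp_le_one hω hsum n x y) (qtp_nonneg hω n x y) one_pos.le
      _ = 1 := by ring
  have hN : qtp d ω N x y ≤ s := by
    have h := le_ciSup hbdd N
    simp only [sub_self, abs_zero, mul_zero, Real.exp_zero, one_mul] at h
    exact h
  rcases le_or_gt (qtp d ω N x y) 0 with h0 | h0
  · exact h0.trans (Real.exp_pos _).le
  · have hs0 : 0 < s := lt_of_lt_of_le h0 hN
    have : Real.exp (-(Gfun d ω u (N : ℝ) x y)) = s := by
      simp only [Gfun, neg_neg, ← hs]
      exact Real.exp_log hs0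
    rw [this]; exact hN
end gb


lemma elog_mono {x y : ℝ} (h : x ≤ y) : elog x ≤ elog y := by
  unfold elog
  split
  · exact bot_le
  · rename_i hx
    push_neg at hx
    rw [if_neg (by linarith)]
    exact_mod_cast Real.log_le_log hx h

lemma elog_le_coe_log {x y : ℝ} (h : x ≤ y) (hy : 0 < y) : elog x ≤ ((Real.log y : ℝ) : EReal) := by
  refine le_trans (elog_mono h) ?_
  unfold elog
  rw [if_neg (by linarith)]



lemma unif_bound {d : ℕ} (Gf : ℝ → (Fin d → ℤ) → ℝ) (x : Fin d → ℝ) (Gx : ℝ)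
    (hseq : ∀ (y : ℕ → Fin d → ℤ),
        Tendsto (fun N : ℕ => fun i => (y N i : ℝ) / (N : ℝ)) atTop (nhds x) →
        Tendsto (fun N : ℕ => (N : ℝ)⁻¹ * Gf (N : ℝ) (y N)) atTop (nhds Gx))
    (ε : ℝ) (hε : 0 < ε) :
    ∃ δ > (0:ℝ), ∃ N₀ : ℕ, ∀ N : ℕ, N₀ ≤ N → ∀ z : Fin d → ℤ,
      (∀ i, |(z i : ℝ) / (N : ℝ) - x i| < δ) → Gx - ε ≤ (N : ℝ)⁻¹ * Gf (N : ℝ) z := by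
  by_contra hcon
  push_neg at hcon
  have H' : ∀ k M : ℕ, ∃ N : ℕ, M ≤ N ∧ ∃ z : Fin d → ℤ,
      (∀ i, |(z i : ℝ) / (N : ℝ) - x i| < 1 / (k + 1 : ℝ)) ∧
      (N : ℝ)⁻¹ * Gf (N : ℝ) z < Gx - ε := by
    intro k M
    obtain ⟨N, hN, z, hz1, hz2⟩ := hcon (1 / (k + 1 : ℝ)) (by positivity) M
    exact ⟨N, hN, z, hz1, hz2⟩
  choose Nf hge zf h1 h2 using H'
  set φ : ℕ → ℕ := fun k => Nat.rec (Nf 0 1) (fun k ih => Nf (k + 1) (ih + 1)) k with hφ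
  have hφ0 : φ 0 = Nf 0 1 := rfl
  have hφs : ∀ k, φ (k + 1) = Nf (k + 1) (φ k + 1) := fun k => rfl
  set ζ : ℕ → (Fin d → ℤ) := fun k => Nat.rec (zf 0 1) (fun k _ => zf (k + 1) (φ k + 1)) k with hζ
  have hζ0 : ζ 0 = zf 0 1 := rfl
  have hζs : ∀ k, ζ (k + 1) = zf (k + 1) (φ k + 1) := fun k => rfl
  have hmono : StrictMono φ := by
    apply strictMono_nat_of_lt_succ
    intro k
    rw [hφs]
    have := hge (k + 1) (φ k + 1)
    omega
  have hφ1 : ∀ k, 1 ≤ φ k := by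
    intro k
    cases k with
    | zero => rw [hφ0]; exact hge 0 1
    | succ k => rw [hφs]; have := hge (k + 1) (φ k + 1); omega
  have hprop : ∀ k, (∀ i, |(ζ k i : ℝ) / (φ k : ℝ) - x i| < 1 / (k + 1 : ℝ)) ∧
      ((φ k : ℝ))⁻¹ * Gf (φ k : ℝ) (ζ k) < Gx - ε := by
    intro k
    cases k with
    | zero => rw [hφ0, hζ0]; exact ⟨h1 0 1, h2 0 1⟩
    | succ k => rw [hφs, hζs]; exact ⟨h1 (k + 1) (φ k + 1), h2 (k + 1) (φ k + 1)⟩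
  classical
  set y : ℕ → (Fin d → ℤ) := fun N =>
    if h : ∃ k, φ k = N then ζ h.choose else fun i => ⌊(N : ℝ) * x i⌋ with hy
  have hyφ : ∀ k, y (φ k) = ζ k := by
    intro k
    have h : ∃ k', φ k' = φ k := ⟨k, rfl⟩
    simp only [hy, dif_pos h]
    exact congrArg ζ (hmono.injective h.choose_spec)
  -- y N / N → x
  have hten : Tendsto (fun N : ℕ => fun i => (y N i : ℝ) / (N : ℝ)) atTop (nhds x) := by
    rw [Metric.tendsto_atTop]
    intro ε' hε'
    obtain ⟨K, hK⟩ := exists_nat_one_div_lt hε'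
    obtain ⟨M', hM'⟩ := exists_nat_gt (1 / ε')
    refine ⟨max (φ K + 1) M', fun N hN => ?_⟩
    have hN1 : φ K + 1 ≤ N := le_trans (le_max_left _ _) hN
    have hN2 : M' ≤ N := le_trans (le_max_right _ _) hN
    have hNpos : (0:ℝ) < N := by
      have : 1 ≤ N := by omega
      exact_mod_cast Nat.lt_of_lt_of_le Nat.zero_lt_one this
    rw [dist_pi_lt_iff hε']
    intro i
    rw [Real.dist_eq]
    by_cases h : ∃ k, φ k = N
    · obtain ⟨k, hk⟩ := h
      have hyN : y N = ζ k := by rw [← hk, hyφ]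
      have hkK : K < k := by
        by_contra hkK
        push_neg at hkK
        have := hmono.le_iff_le.mpr hkK
        omega
      have := (hprop k).1 i
      rw [hyN]
      rw [← hk]
      refine lt_trans this (lt_of_le_of_lt ?_ hK)
      apply one_div_le_one_div_of_le (by positivity)
      have : (K : ℝ) ≤ (k : ℝ) := by exact_mod_cast hkK.le
      linarith
    · have hyN : y N = fun i => ⌊(N : ℝ) * x i⌋ := by simp only [hy, dif_neg h]
      rw [hyN]
      have hfl := Int.sub_one_lt_floor ((N : ℝ) * x i)
      have hfu := Int.floor_le ((N : ℝ) * x i)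
      have e1 : (⌊(N : ℝ) * x i⌋ : ℝ) / N - x i = ((⌊(N : ℝ) * x i⌋ : ℝ) - N * x i) / N := by
        field_simp
      have h1' : |(⌊(N : ℝ) * x i⌋ : ℝ) / N - x i| < 1 / N := by
        rw [e1, abs_div, abs_of_pos hNpos, div_lt_div_iff_of_pos_right hNpos, abs_lt]
        constructor <;> push_cast <;> linarith
      have h2' : 1 / (N : ℝ) < ε' := by
        have hMN : (M' : ℝ) ≤ N := by exact_mod_cast hN2
        have h3' := (div_lt_iff₀ hε').mp (lt_of_lt_of_le hM' hMN)
        rw [div_lt_iff₀ hNpos]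
        linarith
      exact lt_trans h1' h2'
  -- derive contradiction
  have hten2 := hseq y hten
  have hev : ∀ᶠ N : ℕ in atTop, Gx - ε < (N : ℝ)⁻¹ * Gf (N : ℝ) (y N) :=
    hten2.eventually (eventually_gt_nhds (by linarith))
  obtain ⟨M, hM⟩ := eventually_atTop.mp hev
  have hkM : M ≤ φ M := (hmono.le_apply)
  have := hM (φ M) hkM
  rw [hyφ] at this
  exact absurd this (not_lt.mpr (hprop M).2.le)

theorem stmt5 (d : ℕ) (hd : 1 ≤ d) (κ : ℝ) (hκ0 : 0 < κ) (hκ1 : κ ≤ 1 / (2 * d))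
    (ω : (Fin d → ℤ) → (Fin d → ℤ) → ℝ)
    (hell : ∀ x, ∀ e ∈ unitVecs d, κ ≤ ω x e)
    (hsum : ∀ x, ∑ e ∈ unitVecs d, ω x e = 1)
    (Gt : ℝ → (Fin d → ℝ) → ℝ)
    (hGt : ∀ u : ℝ, 0 < u → Continuous (Gt u) ∧
      ∀ (η : Fin d → ℝ) (y : ℕ → Fin d → ℤ),
        Tendsto (fun N : ℕ => fun i => (y N i : ℝ) / (N : ℝ)) atTop (nhds η) →
        Tendsto (fun N : ℕ => (N : ℝ)⁻¹ * Gfun d ω u (N : ℝ) 0 (y N)) atTop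
          (nhds (Gt u η)))
    (F : Set (Fin d → ℝ)) (hF : IsClosed F) :
    Filter.limsup
        (fun N : ℕ => (((N : ℝ)⁻¹ : ℝ) : EReal) * elog (probQ d ω N F)) atTop
      ≤ - ⨅ x ∈ F, ⨆ u : Set.Ioi (0 : ℝ), ((Gt u x : ℝ) : EReal) := by
  classical
  have hω : ∀ x, ∀ e ∈ unitVecs d, 0 ≤ ω x e := fun x e he => hκ0.le.trans (hell x e he)
  set I : (Fin d → ℝ) → EReal := fun x => ⨆ u : Set.Ioi (0:ℝ), ((Gt (↑u) x : ℝ) : EReal)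
    with hI
  set K : Set (Fin d → ℝ) := F ∩ Metric.closedBall 0 1 with hKdef
  have hKc : IsCompact K := (isCompact_closedBall (0 : Fin d → ℝ) 1).inter_left hF
  -- Main estimate
  have main : ∀ c : ℝ, (c : EReal) < ⨅ x ∈ K, I x →
      Filter.limsup (fun N : ℕ => (((N : ℝ)⁻¹ : ℝ) : EReal) * elog (probQ d ω N F)) atTop
        ≤ ((-c : ℝ) : EReal) := by
    intro c hc
    have key : ∀ x : ↥K, ∃ δ : ℝ, 0 < δ ∧ ∃ N₀ : ℕ, ∀ N : ℕ, N₀ ≤ N → ∀ z : Fin d → ℤ,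
        (∀ i, |(z i : ℝ) / (N : ℝ) - (x : Fin d → ℝ) i| < δ) →
        qtp d ω N 0 z ≤ Real.exp (-((N : ℝ) * c)) := by
      intro x
      have hcx : (c : EReal) < I ↑x := lt_of_lt_of_le hc (iInf₂_le (↑x : Fin d → ℝ) x.2)
      rw [hI] at hcx
      obtain ⟨u, hcu⟩ := lt_iSup_iff.mp hcx
      have hu : (0 : ℝ) < (u : ℝ) := u.2
      have hcu' : c < Gt u ↑x := by exact_mod_cast hcu
      obtain ⟨hGcont, hGseq⟩ := hGt u hu
      obtain ⟨δ, hδ, N₀, hb⟩ := unif_bound (fun t z => Gfun d ω u t 0 z) ↑x (Gt u ↑x)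
        (fun y hy => hGseq ↑x y hy) (Gt (↑u) ↑x - c) (by linarith)
      refine ⟨δ, hδ, max N₀ 1, fun N hN z hz => ?_⟩
      have hN0 : N₀ ≤ N := le_trans (le_max_left _ _) hN
      have hN1 : (1 : ℕ) ≤ N := le_trans (le_max_right _ _) hN
      have hNpos : (0 : ℝ) < (N : ℝ) := by exact_mod_cast Nat.lt_of_lt_of_le Nat.zero_lt_one hN1
      have h3 := hb N hN0 z hz
      have h4 : (N : ℝ) * c ≤ Gfun d ω (↑u) (N : ℝ) 0 z := by
        have h5 : c ≤ (N : ℝ)⁻¹ * Gfun d ω (↑u) (N : ℝ) 0 z := by linarith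
        have h6 := mul_le_mul_of_nonneg_left h5 hNpos.le
        calc (N : ℝ) * c ≤ (N : ℝ) * ((N : ℝ)⁻¹ * Gfun d ω (↑u) (N : ℝ) 0 z) := h6
          _ = Gfun d ω (↑u) (N : ℝ) 0 z := by field_simp
      calc qtp d ω N 0 z ≤ Real.exp (-(Gfun d ω (↑u) (N : ℝ) 0 z)) :=
            qtp_le_exp hω hsum (↑u) hu.le N 0 z
        _ ≤ Real.exp (-((N : ℝ) * c)) := Real.exp_le_exp.mpr (by linarith)
    choose δf hδf N₀f hbf using key
    have hcover : K ⊆ ⋃ x : ↥K, Metric.ball (↑x : Fin d → ℝ) (δf x) := fun x hx =>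
      Set.mem_iUnion.mpr ⟨⟨x, hx⟩, Metric.mem_ball_self (hδf _)⟩
    obtain ⟨T, hT⟩ := hKc.elim_finite_subcover _ (fun x => Metric.isOpen_ball) hcover
    set N₁ : ℕ := max 1 (T.sup N₀f) with hN₁
    have hpt : ∀ N : ℕ, N₁ ≤ N → ∀ z : Fin d → ℤ,
        F.indicator (fun _ => qtp d ω N 0 z) (fun i => (z i : ℝ) / (N : ℝ))
          ≤ Real.exp (-((N : ℝ) * c)) := by
      intro N hN z
      have hN1 : (1 : ℕ) ≤ N := le_trans (le_max_left _ _) hN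
      have hNpos : (0 : ℝ) < (N : ℝ) := by exact_mod_cast Nat.lt_of_lt_of_le Nat.zero_lt_one hN1
      by_cases hzF : (fun i => (z i : ℝ) / (N : ℝ)) ∈ F
      · rw [Set.indicator_of_mem hzF]
        by_cases hq : qtp d ω N 0 z = 0
        · rw [hq]; positivity
        · have hz1 : ∀ i, |(z i : ℝ)| ≤ (N : ℝ) := by
            intro i
            have h7 := qtp_support N 0 z hq i
            simp only [Pi.zero_apply, sub_zero] at h7
            exact_mod_cast h7
          have hball : (fun i => (z i : ℝ) / (N : ℝ)) ∈ Metric.closedBall (0 : Fin d → ℝ) 1 := by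
            rw [Metric.mem_closedBall, dist_pi_le_iff zero_le_one]
            intro i
            rw [Real.dist_eq]
            simp only [Pi.zero_apply, sub_zero]
            rw [abs_div, abs_of_pos hNpos, div_le_one hNpos]
            exact hz1 i
          have hzK : (fun i => (z i : ℝ) / (N : ℝ)) ∈ K := ⟨hzF, hball⟩
          obtain ⟨x, hxT, hxball⟩ := Set.mem_iUnion₂.mp (hT hzK)
          have hdist := (dist_pi_lt_iff (hδf x)).mp (Metric.mem_ball.mp hxball)
          exact hbf x N (le_trans (le_trans (Finset.le_sup hxT) (le_max_right 1 _)) hN) z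
            (fun i => by have h8 := hdist i; rwa [Real.dist_eq] at h8)
      · rw [Set.indicator_of_notMem hzF]; positivity
    have hprob : ∀ N : ℕ, N₁ ≤ N →
        probQ d ω N F ≤ ((2 * N + 1 : ℕ) : ℝ) ^ d * Real.exp (-((N : ℝ) * c)) := by
      intro N hN
      set B : Finset (Fin d → ℤ) := Finset.Icc (fun _ => -(N : ℤ)) (fun _ => (N : ℤ)) with hB
      have hsupp : ∀ z : Fin d → ℤ, z ∉ B →
          F.indicator (fun _ => qtp d ω N 0 z) (fun i => (z i : ℝ) / (N : ℝ)) = 0 := by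
        intro z hz
        rw [hB, Finset.mem_Icc] at hz
        have hbig : ∃ i, ¬(-(N : ℤ) ≤ z i ∧ z i ≤ (N : ℤ)) := by
          by_contra hcon
          push_neg at hcon
          exact hz ⟨fun i => (hcon i).1, fun i => (hcon i).2⟩
        obtain ⟨i, hi⟩ := hbig
        have hq : qtp d ω N 0 z = 0 := by
          by_contra hq
          have h9 := qtp_support N 0 z hq i
          simp only [Pi.zero_apply, sub_zero] at h9
          rw [abs_le] at h9
          exact hi ⟨h9.1, h9.2⟩
        simp [hq]
      have hcard : B.card = (2 * N + 1) ^ d := by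
        have hic : (Finset.Icc (-(N : ℤ)) (N : ℤ)).card = 2 * N + 1 := by
          rw [Int.card_Icc]; omega
        rw [hB, Pi.card_Icc]
        simp only [hic, Finset.prod_const, Finset.card_univ, Fintype.card_fin]
      rw [probQ, tsum_eq_sum hsupp]
      calc ∑ z ∈ B, F.indicator (fun _ => qtp d ω N 0 z) (fun i => (z i : ℝ) / (N : ℝ))
          ≤ B.card • Real.exp (-((N : ℝ) * c)) :=
            Finset.sum_le_card_nsmul _ _ _ (fun z _ => hpt N hN z)
        _ = (B.card : ℝ) * Real.exp (-((N : ℝ) * c)) := nsmul_eq_mul _ _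
        _ = ((2 * N + 1 : ℕ) : ℝ) ^ d * Real.exp (-((N : ℝ) * c)) := by
            rw [hcard]; push_cast; ring
    -- pass to elog and limsup
    have hls : ∀ᶠ N : ℕ in atTop,
        (((N : ℝ)⁻¹ : ℝ) : EReal) * elog (probQ d ω N F)
          ≤ (((N : ℝ)⁻¹ * ((d : ℝ) * Real.log (2 * (N : ℝ) + 1)) - c : ℝ) : EReal) := by
      rw [eventually_atTop]
      refine ⟨N₁, fun N hN => ?_⟩
      have hN1 : (1 : ℕ) ≤ N := le_trans (le_max_left _ _) hN
      have hNpos : (0 : ℝ) < (N : ℝ) := by exact_mod_cast Nat.lt_of_lt_of_le Nat.zero_lt_one hN1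
      have hMpos : (0 : ℝ) < ((2 * N + 1 : ℕ) : ℝ) ^ d * Real.exp (-((N : ℝ) * c)) := by
        positivity
      have h10 : elog (probQ d ω N F)
          ≤ ((Real.log (((2 * N + 1 : ℕ) : ℝ) ^ d * Real.exp (-((N : ℝ) * c))) : ℝ) : EReal) :=
        elog_le_coe_log (hprob N hN) hMpos
      have h11 : Real.log (((2 * N + 1 : ℕ) : ℝ) ^ d * Real.exp (-((N : ℝ) * c)))
          = (d : ℝ) * Real.log (2 * (N : ℝ) + 1) - (N : ℝ) * c := by
        rw [Real.log_mul (by positivity) (Real.exp_ne_zero _), Real.log_pow, Real.log_exp]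
        push_cast
        ring
      rw [h11] at h10
      have h12 := mul_le_mul_of_nonneg_left h10
        (by exact_mod_cast inv_nonneg.mpr hNpos.le : (0 : EReal) ≤ (((N : ℝ)⁻¹ : ℝ) : EReal))
      refine le_trans h12 ?_
      rw [← EReal.coe_mul]
      apply EReal.coe_le_coe_iff.mpr
      rw [mul_sub]
      have : (N : ℝ)⁻¹ * ((N : ℝ) * c) = c := by field_simp
      rw [this]
    have hlim : Tendsto (fun N : ℕ => ((N : ℝ)⁻¹ * ((d : ℝ) * Real.log (2 * (N : ℝ) + 1)) - c : ℝ))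
        atTop (nhds (-c)) := by
      have h13 : Tendsto (fun x : ℝ => Real.log x / x) atTop (nhds 0) :=
        Real.isLittleO_log_id_atTop.tendsto_div_nhds_zero
      have h14 : Tendsto (fun N : ℕ => (2 * (N : ℝ) + 1)) atTop atTop := by
        apply Filter.tendsto_atTop_add_const_right
        exact (tendsto_natCast_atTop_atTop (R := ℝ)).const_mul_atTop (by norm_num)
      have h15 : Tendsto (fun N : ℕ => Real.log (2 * (N : ℝ) + 1) / (2 * (N : ℝ) + 1))
          atTop (nhds 0) := h13.comp h14
      have h16 : Tendsto (fun N : ℕ => (2 * (N : ℝ) + 1) / (N : ℝ)) atTop (nhds 2) := by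
        have h17 : Tendsto (fun N : ℕ => 2 + ((N : ℝ))⁻¹) atTop (nhds 2) := by
          have := tendsto_inv_atTop_zero.comp (tendsto_natCast_atTop_atTop (R := ℝ))
          simpa using tendsto_const_nhds.add this
        apply h17.congr'
        filter_upwards [eventually_gt_atTop 0] with N hN
        have hNpos : (0 : ℝ) < (N : ℝ) := by exact_mod_cast hN
        field_simp
      have h18 : Tendsto (fun N : ℕ => (d : ℝ) *
          ((Real.log (2 * (N : ℝ) + 1) / (2 * (N : ℝ) + 1)) * ((2 * (N : ℝ) + 1) / (N : ℝ))))
          atTop (nhds ((d : ℝ) * (0 * 2))) := (h15.mul h16).const_mul _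
      rw [zero_mul, mul_zero] at h18
      have h19 : Tendsto (fun N : ℕ => (N : ℝ)⁻¹ * ((d : ℝ) * Real.log (2 * (N : ℝ) + 1)))
          atTop (nhds 0) := by
        apply h18.congr'
        filter_upwards [eventually_gt_atTop 0] with N hN
        have hNpos : (0 : ℝ) < (N : ℝ) := by exact_mod_cast hN
        have h2N : (0 : ℝ) < 2 * (N : ℝ) + 1 := by linarith
        field_simp
      simpa using h19.sub_const c
    calc Filter.limsup (fun N : ℕ => (((N : ℝ)⁻¹ : ℝ) : EReal) * elog (probQ d ω N F)) atTop
        ≤ Filter.limsup (fun N : ℕ =>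
            (((N : ℝ)⁻¹ * ((d : ℝ) * Real.log (2 * (N : ℝ) + 1)) - c : ℝ) : EReal)) atTop :=
          limsup_le_limsup hls
      _ = ((-c : ℝ) : EReal) := (EReal.tendsto_coe.mpr hlim).limsup_eq
  -- conclude
  have hbot : (⊥ : EReal) < ⨅ x ∈ K, I x := by
    rcases Set.eq_empty_or_nonempty K with hKe | hKne
    · simp [hKe]
    · obtain ⟨x₀, hx₀, hmin⟩ := hKc.exists_isMinOn hKne ((hGt 1 one_pos).1.continuousOn)
      refine lt_of_lt_of_le (EReal.bot_lt_coe (Gt 1 x₀)) (le_iInf₂ fun x hx => ?_)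
      have h20 : Gt 1 x₀ ≤ Gt 1 x := hmin hx
      have h21 : ((Gt 1 x : ℝ) : EReal) ≤ I x := by
        rw [hI]
        exact le_iSup (fun u : Set.Ioi (0:ℝ) => ((Gt (↑u) x : ℝ) : EReal)) ⟨1, by norm_num⟩
      exact le_trans (by exact_mod_cast h20) h21
  have hKF : - ⨅ x ∈ K, I x ≤ - ⨅ x ∈ F, I x := by
    rw [EReal.neg_le_neg_iff]
    exact iInf_le_iInf_of_subset Set.inter_subset_left
  refine le_trans ?_ hKF
  by_contra hcon
  push_neg at hcon
  obtain ⟨r, hr1, hr2⟩ := EReal.exists_between_coe_real hcon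
  have hrc : ((-r : ℝ) : EReal) < ⨅ x ∈ K, I x := by
    rw [EReal.coe_neg]
    exact EReal.neg_lt_of_neg_lt hr1
  have := main (-r) hrc
  rw [neg_neg] at this
  exact absurd this (not_le.mpr hr2)
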